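/- Let 2 ≤ L ≤ K-2 and let θ be an interaction function satisfying S3_θ(L). Then θ satisfies F4_θ(L): for every bundle A with |A|=L-2 and distinct goods i,j,k,l not in A, the triple (θ(Aij)+θ(Akl), θ(Aik)+θ(Ajl), θ(Ail)+θ(Ajk)) has the double minimum property. -/
import Mathlib


def DoubleMin (x y z : ℝ) : Prop :=
  (x = min x (min y z) ∧ y = min x (min y z)) ∨
  (x = min x (min y z) ∧ z = min x (min y z)) ∨
  (y = min x (min y z) ∧ z = min x (min y z))

lemma eq_min3_left (x y z : ℝ) : x = min x (min y z) ↔ x ≤ y ∧ x ≤ z := by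
  constructor
  · intro h
    have h' : x ≤ min y z := le_of_eq h |>.trans (min_le_right _ _)
    exact ⟨h'.trans (min_le_left _ _), h'.trans (min_le_right _ _)⟩
  · rintro ⟨h1, h2⟩
    exact (min_eq_left (le_min h1 h2)).symm

lemma eq_min3_mid (x y z : ℝ) : y = min x (min y z) ↔ y ≤ x ∧ y ≤ z := by
  constructor
  · intro h
    refine ⟨le_of_eq h |>.trans (min_le_left _ _), ?_⟩
    exact le_of_eq h |>.trans ((min_le_right _ _).trans (min_le_right _ _))
  · rintro ⟨h1, h2⟩
    rw [min_eq_left h2, min_eq_right h1]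

lemma eq_min3_right (x y z : ℝ) : z = min x (min y z) ↔ z ≤ x ∧ z ≤ y := by
  constructor
  · intro h
    refine ⟨le_of_eq h |>.trans (min_le_left _ _), ?_⟩
    exact le_of_eq h |>.trans ((min_le_right _ _).trans (min_le_left _ _))
  · rintro ⟨h1, h2⟩
    rw [min_eq_right h2, min_eq_right h1]

lemma dm_iff (x y z : ℝ) : DoubleMin x y z ↔
    (x = y ∧ x ≤ z) ∨ (x = z ∧ x ≤ y) ∨ (y = z ∧ y ≤ x) := by
  unfold DoubleMin
  rw [eq_min3_left, eq_min3_mid, eq_min3_right]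
  constructor
  · rintro (⟨⟨h1, h2⟩, h3, h4⟩ | ⟨⟨h1, h2⟩, h3, h4⟩ | ⟨⟨h1, h2⟩, h3, h4⟩)
    · exact Or.inl ⟨le_antisymm h1 h3, h2⟩
    · exact Or.inr (Or.inl ⟨le_antisymm h2 h3, h1⟩)
    · exact Or.inr (Or.inr ⟨le_antisymm h2 h4, h1⟩)
  · rintro (⟨h1, h2⟩ | ⟨h1, h2⟩ | ⟨h1, h2⟩)
    · exact Or.inl ⟨⟨le_of_eq h1, h2⟩, le_of_eq h1.symm, by linarith⟩
    · exact Or.inr (Or.inl ⟨⟨h2, le_of_eq h1⟩, le_of_eq h1.symm, by linarith⟩)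
    · exact Or.inr (Or.inr ⟨⟨h2, le_of_eq h1⟩, by linarith, le_of_eq h1.symm⟩)

/-- In a "min attained twice" triple, if the first entry dominates the other two,
    then the other two are equal. -/
lemma dm_eq_of_max {x y z : ℝ} (h : DoubleMin x y z) (hy : y ≤ x) (hz : z ≤ x) :
    y = z := by
  rw [dm_iff] at h
  rcases h with ⟨h1, h2⟩ | ⟨h1, h2⟩ | ⟨h1, h2⟩ <;> linarith

/-- In a "min attained twice" triple, the last entry dominates one of the first two. -/
lemma dm_ge_of_third {x y z : ℝ} (h : DoubleMin x y z) : x ≤ z ∨ y ≤ z := by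
  rw [dm_iff] at h
  rcases h with ⟨h1, h2⟩ | ⟨h1, h2⟩ | ⟨h1, h2⟩
  · exact Or.inl h2
  · exact Or.inl (le_of_eq h1)
  · exact Or.inr (le_of_eq h1)

/-- `DoubleMin` is invariant under permutations and pointwise equalities. -/
lemma dm_perm {a b c a' b' c' : ℝ} (h : DoubleMin a b c)
    (hp : (a = a' ∧ b = b' ∧ c = c') ∨ (a = a' ∧ b = c' ∧ c = b') ∨
          (a = b' ∧ b = a' ∧ c = c') ∨ (a = b' ∧ b = c' ∧ c = a') ∨
          (a = c' ∧ b = a' ∧ c = b') ∨ (a = c' ∧ b = b' ∧ c = a')) :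
    DoubleMin a' b' c' := by
  rw [dm_iff] at h ⊢
  rcases hp with ⟨e1, e2, e3⟩ | ⟨e1, e2, e3⟩ | ⟨e1, e2, e3⟩ | ⟨e1, e2, e3⟩ |
    ⟨e1, e2, e3⟩ | ⟨e1, e2, e3⟩ <;>
    rcases h with ⟨h1, h2⟩ | ⟨h1, h2⟩ | ⟨h1, h2⟩ <;>
    first
      | exact Or.inl ⟨by linarith, by linarith⟩
      | exact Or.inr (Or.inl ⟨by linarith, by linarith⟩)
      | exact Or.inr (Or.inr ⟨by linarith, by linarith⟩)

/-- Main step, assuming the edge `p = d 1 2` is maximal among all six edges.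
    Here `p q r s t u` stand for `d12 d13 d14 d23 d24 d34`. -/
lemma dm_helper {p q r s t u : ℝ}
    (hq : q ≤ p) (hr : r ≤ p) (hs : s ≤ p) (ht : t ≤ p) (_hu : u ≤ p)
    (h123 : DoubleMin p q s) (h124 : DoubleMin p r t) (h134 : DoubleMin q r u) :
    DoubleMin (p + u) (q + t) (r + s) := by
  have hqs : q = s := dm_eq_of_max h123 hq hs
  have hrt : r = t := dm_eq_of_max h124 hr ht
  have h3 := dm_ge_of_third h134
  rw [dm_iff]
  refine Or.inr (Or.inr ⟨by linarith, ?_⟩)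
  rcases h3 with h | h <;> linarith

/-- The six-edge version: from the four triangle conditions, deduce the
    four-point (pairing) condition. -/
lemma dm_key {p q r s t u : ℝ}
    (h123 : DoubleMin p q s) (h124 : DoubleMin p r t)
    (h134 : DoubleMin q r u) (h234 : DoubleMin s t u) :
    DoubleMin (p + u) (q + t) (r + s) := by
  set m := max p (max q (max r (max s (max t u)))) with hm
  have hpm : p ≤ m := le_max_left _ _
  have hqm : q ≤ m := le_trans (le_max_left _ _) (le_max_right _ _)
  have hrm : r ≤ m := le_trans (le_trans (le_max_left _ _) (le_max_right _ _)) (le_max_right _ _)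
  have hsm : s ≤ m := le_trans (le_trans (le_trans (le_max_left _ _) (le_max_right _ _))
    (le_max_right _ _)) (le_max_right _ _)
  have htm : t ≤ m := le_trans (le_trans (le_trans (le_trans (le_max_left _ _)
    (le_max_right _ _)) (le_max_right _ _)) (le_max_right _ _)) (le_max_right _ _)
  have hum : u ≤ m := le_trans (le_trans (le_trans (le_trans (le_max_right _ _)
    (le_max_right _ _)) (le_max_right _ _)) (le_max_right _ _)) (le_max_right _ _)
  have hcase : m = p ∨ m = q ∨ m = r ∨ m = s ∨ m = t ∨ m = u := by
    rw [hm]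
    rcases max_cases p (max q (max r (max s (max t u)))) with ⟨h, _⟩ | ⟨h, _⟩
    · exact Or.inl h
    rcases max_cases q (max r (max s (max t u))) with ⟨h', _⟩ | ⟨h', _⟩
    · exact Or.inr (Or.inl (h.trans h'))
    rcases max_cases r (max s (max t u)) with ⟨h'', _⟩ | ⟨h'', _⟩
    · exact Or.inr (Or.inr (Or.inl ((h.trans h').trans h'')))
    rcases max_cases s (max t u) with ⟨h3, _⟩ | ⟨h3, _⟩
    · exact Or.inr (Or.inr (Or.inr (Or.inl (((h.trans h').trans h'').trans h3))))
    rcases max_cases t u with ⟨h4, _⟩ | ⟨h4, _⟩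
    · exact Or.inr (Or.inr (Or.inr (Or.inr (Or.inl
        ((((h.trans h').trans h'').trans h3).trans h4)))))
    · exact Or.inr (Or.inr (Or.inr (Or.inr (Or.inr
        ((((h.trans h').trans h'').trans h3).trans h4)))))
  rcases hcase with h | h | h | h | h | h
  · -- max is p = d12
    exact dm_helper (h ▸ hqm) (h ▸ hrm) (h ▸ hsm) (h ▸ htm) (h ▸ hum) h123 h124 h134
  · -- max is q = d13 ; relabel points (1,3,2,4)
    have P1 : DoubleMin q p s := dm_perm h123 (Or.inr (Or.inr (Or.inl ⟨rfl, rfl, rfl⟩)))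
    have hc : DoubleMin (q + t) (p + u) (r + s) :=
      dm_helper (h ▸ hpm) (h ▸ hrm) (h ▸ hsm) (h ▸ hum) (h ▸ htm) P1 h134 h124
    exact dm_perm hc (Or.inr (Or.inr (Or.inl ⟨rfl, rfl, rfl⟩)))
  · -- max is r = d14 ; relabel points (1,4,2,3)
    have P1 : DoubleMin r p t := dm_perm h124 (Or.inr (Or.inr (Or.inl ⟨rfl, rfl, rfl⟩)))
    have P2 : DoubleMin r q u := dm_perm h134 (Or.inr (Or.inr (Or.inl ⟨rfl, rfl, rfl⟩)))
    have hc : DoubleMin (r + s) (p + u) (q + t) :=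
      dm_helper (h ▸ hpm) (h ▸ hqm) (h ▸ htm) (h ▸ hum) (h ▸ hsm) P1 P2 h123
    exact dm_perm hc (Or.inr (Or.inr (Or.inr (Or.inr (Or.inl ⟨rfl, rfl, rfl⟩)))))
  · -- max is s = d23 ; relabel points (2,3,1,4)
    have P1 : DoubleMin s p q :=
      dm_perm h123 (Or.inr (Or.inr (Or.inr (Or.inl ⟨rfl, rfl, rfl⟩))))
    have P3 : DoubleMin p t r := dm_perm h124 (Or.inr (Or.inl ⟨rfl, rfl, rfl⟩))
    have hc : DoubleMin (s + r) (p + u) (t + q) :=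
      dm_helper (h ▸ hpm) (h ▸ htm) (h ▸ hqm) (h ▸ hum) (h ▸ hrm) P1 h234 P3
    exact dm_perm hc (Or.inr (Or.inr (Or.inr (Or.inr (Or.inl
      ⟨by ring, rfl, by ring⟩)))))
  · -- max is t = d24 ; relabel points (2,4,1,3)
    have P1 : DoubleMin t p r :=
      dm_perm h124 (Or.inr (Or.inr (Or.inr (Or.inl ⟨rfl, rfl, rfl⟩))))
    have P2 : DoubleMin t s u := dm_perm h234 (Or.inr (Or.inr (Or.inl ⟨rfl, rfl, rfl⟩)))
    have P3 : DoubleMin p s q := dm_perm h123 (Or.inr (Or.inl ⟨rfl, rfl, rfl⟩))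
    have hc : DoubleMin (t + q) (p + u) (s + r) :=
      dm_helper (h ▸ hpm) (h ▸ hsm) (h ▸ hrm) (h ▸ hum) (h ▸ hqm) P1 P2 P3
    exact dm_perm hc (Or.inr (Or.inr (Or.inl ⟨by ring, rfl, by ring⟩)))
  · -- max is u = d34 ; relabel points (3,4,1,2)
    have P1 : DoubleMin u q r :=
      dm_perm h134 (Or.inr (Or.inr (Or.inr (Or.inl ⟨rfl, rfl, rfl⟩))))
    have P2 : DoubleMin u s t :=
      dm_perm h234 (Or.inr (Or.inr (Or.inr (Or.inl ⟨rfl, rfl, rfl⟩))))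
    have P3 : DoubleMin q s p :=
      dm_perm h123 (Or.inr (Or.inr (Or.inr (Or.inr (Or.inl ⟨rfl, rfl, rfl⟩)))))
    have hc : DoubleMin (u + p) (q + t) (s + r) :=
      dm_helper (h ▸ hqm) (h ▸ hsm) (h ▸ hrm) (h ▸ htm) (h ▸ hpm) P1 P2 P3
    exact dm_perm hc (Or.inl ⟨by ring, rfl, by ring⟩)

/-- `DoubleMin` is invariant under a common translation. -/
lemma dm_shift {x y z : ℝ} (c : ℝ) (h : DoubleMin x y z) :
    DoubleMin (x + c) (y + c) (z + c) := by
  rw [dm_iff] at h ⊢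
  rcases h with ⟨h1, h2⟩ | ⟨h1, h2⟩ | ⟨h1, h2⟩
  · exact Or.inl ⟨by linarith, by linarith⟩
  · exact Or.inr (Or.inl ⟨by linarith, by linarith⟩)
  · exact Or.inr (Or.inr ⟨by linarith, by linarith⟩)

/-- The purely real-number content: the triangle conditions with "singleton"
    corrections imply the pairing condition. -/
lemma dm_main {a12 a13 a14 a23 a24 a34 b1 b2 b3 b4 : ℝ}
    (h123 : DoubleMin (a12 + b3) (a13 + b2) (a23 + b1))
    (h124 : DoubleMin (a12 + b4) (a14 + b2) (a24 + b1))
    (h134 : DoubleMin (a13 + b4) (a14 + b3) (a34 + b1))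
    (h234 : DoubleMin (a23 + b4) (a24 + b3) (a34 + b2)) :
    DoubleMin (a12 + a34) (a13 + a24) (a14 + a23) := by
  set p := a12 - b1 - b2 with hp
  set q := a13 - b1 - b3 with hq
  set r := a14 - b1 - b4 with hr
  set s := a23 - b2 - b3 with hs
  set t := a24 - b2 - b4 with ht
  set u := a34 - b3 - b4 with hu
  have e123 : DoubleMin p q s :=
    dm_perm (dm_shift (-(b1 + b2 + b3)) h123)
      (Or.inl ⟨by rw [hp]; ring, by rw [hq]; ring, by rw [hs]; ring⟩)
  have e124 : DoubleMin p r t :=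
    dm_perm (dm_shift (-(b1 + b2 + b4)) h124)
      (Or.inl ⟨by rw [hp]; ring, by rw [hr]; ring, by rw [ht]; ring⟩)
  have e134 : DoubleMin q r u :=
    dm_perm (dm_shift (-(b1 + b3 + b4)) h134)
      (Or.inl ⟨by rw [hq]; ring, by rw [hr]; ring, by rw [hu]; ring⟩)
  have e234 : DoubleMin s t u :=
    dm_perm (dm_shift (-(b2 + b3 + b4)) h234)
      (Or.inl ⟨by rw [hs]; ring, by rw [ht]; ring, by rw [hu]; ring⟩)
  have key := dm_shift (b1 + b2 + b3 + b4) (dm_key e123 e124 e134 e234)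
  exact dm_perm key (Or.inl ⟨by rw [hp, hu]; ring, by rw [hq, ht]; ring,
    by rw [hr, hs]; ring⟩)

theorem S3theta_implies_F4theta {K L : ℕ} (hL2 : 2 ≤ L) (hLK : L ≤ K - 2)
    (θ : Finset (Fin K) → ℝ)
    (hθ0 : ∀ A : Finset (Fin K), A.card ≤ 1 → θ A = 0)
    (hS3 : ∀ (A : Finset (Fin K)) (i j k : Fin K), A.card = L - 2 →
      i ∉ A → j ∉ A → k ∉ A → i ≠ j → i ≠ k → j ≠ k →
      DoubleMin (θ (insert i (insert j A)) + θ (insert k A))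
                (θ (insert i (insert k A)) + θ (insert j A))
                (θ (insert j (insert k A)) + θ (insert i A))) :
    ∀ (A : Finset (Fin K)) (i j k l : Fin K), A.card = L - 2 →
      i ∉ A → j ∉ A → k ∉ A → l ∉ A →
      i ≠ j → i ≠ k → i ≠ l → j ≠ k → j ≠ l → k ≠ l →
      DoubleMin (θ (insert i (insert j A)) + θ (insert k (insert l A)))
                (θ (insert i (insert k A)) + θ (insert j (insert l A)))
                (θ (insert i (insert l A)) + θ (insert j (insert k A))) := by
  intro A i j k l hA hi hj hk hl hij hik hil hjk hjl hkl
  exact dm_main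
    (hS3 A i j k hA hi hj hk hij hik hjk)
    (hS3 A i j l hA hi hj hl hij hil hjl)
    (hS3 A i k l hA hi hk hl hik hil hkl)
    (hS3 A j k l hA hj hk hl hjk hjl hkl)
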